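/- Let β̃ > 0, c̃ ∈ ℝ, α ∈ (0, 2] and L̃ > 0, and let F(𝒰, 𝒱, s) = (𝒱, −c̃𝒱 − f̃_A(𝒰, H̃_α(s)), (α/2)(1 − s²)) be the compactified Allee vector field on ℝ² × [−1, 1], where f̃_A(𝒰, h) = −β̃²𝒰 + 4β̃h𝒰² − 𝒰³. Then F is differentiable (within ℝ² × [−1, 1]) at the equilibria p̃⁻ = (0, 0, −1) and p̃⁺ = (0, 0, 1), its derivative at p̃⁻ is the linear map with matrix [[0, 1, 0], [β̃², −c̃, 0], [0, 0, α]], and its derivative at p̃⁺ is the linear map with matrix [[0, 1, 0], [β̃², −c̃, 0], [0, 0, −α]]. -/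

import Mathlib

open Set Filter Asymptotics

private lemma abs_tanh_le_one (x : ℝ) : |Real.tanh x| ≤ 1 := by
  rw [Real.tanh_eq_sinh_div_cosh, abs_div, abs_of_pos (Real.cosh_pos x)]
  rw [div_le_one (Real.cosh_pos x), Real.abs_sinh]
  calc Real.sinh |x| ≤ Real.cosh |x| := (Real.sinh_lt_cosh _).le
    _ = Real.cosh x := Real.cosh_abs x

/-- Key: the error term has derivative zero within the set. -/
private lemma error_deriv_zero (βt M : ℝ) (hM : 0 ≤ M) (Hα : ℝ → ℝ)
    (hbound : ∀ s ∈ Set.Icc (-1:ℝ) 1, |Hα s| ≤ M) (w₀ : ℝ) :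
    HasFDerivWithinAt (fun p : ℝ × ℝ × ℝ => ((0:ℝ), p.1 ^ 3 - 4 * βt * Hα p.2.2 * p.1 ^ 2, (0:ℝ)))
      (0 : (ℝ × ℝ × ℝ) →L[ℝ] (ℝ × ℝ × ℝ))
      (Set.univ ×ˢ Set.univ ×ˢ Set.Icc (-1 : ℝ) 1) ((0:ℝ), (0:ℝ), w₀) := by
  set p₀ : ℝ × ℝ × ℝ := ((0:ℝ), (0:ℝ), w₀) with hp₀
  refine HasFDerivWithinAt.of_isLittleO ?_
  rw [isLittleO_iff]
  intro ε hε
  have hC : (0:ℝ) < 4 * |βt| * M + 1 := by positivity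
  set δ : ℝ := min 1 (ε / (4 * |βt| * M + 1)) with hδdef
  have hδ : 0 < δ := lt_min one_pos (by positivity)
  have hmem : Metric.ball p₀ δ ∩ (Set.univ ×ˢ Set.univ ×ˢ Set.Icc (-1 : ℝ) 1) ∈
      nhdsWithin p₀ (Set.univ ×ˢ Set.univ ×ˢ Set.Icc (-1 : ℝ) 1) :=
    Filter.inter_mem (nhdsWithin_le_nhds (Metric.ball_mem_nhds _ hδ)) self_mem_nhdsWithin
  filter_upwards [hmem] with p hp
  obtain ⟨hball, hS⟩ := hp
  have hw : p.2.2 ∈ Set.Icc (-1:ℝ) 1 := hS.2.2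
  have hdist : ‖p - p₀‖ < δ := by rw [← dist_eq_norm]; exact hball
  have hu : |p.1| ≤ ‖p - p₀‖ := by
    have := norm_fst_le (p - p₀)
    simpa [hp₀, Real.norm_eq_abs] using this
  have hud : |p.1| ≤ δ := le_of_lt (lt_of_le_of_lt hu hdist)
  have h1d : |p.1| ≤ 1 := le_trans hud (min_le_left _ _)
  have hnorm : ‖((0:ℝ), p.1 ^ 3 - 4 * βt * Hα p.2.2 * p.1 ^ 2, (0:ℝ))
      - ((0:ℝ), p₀.1 ^ 3 - 4 * βt * Hα p₀.2.2 * p₀.1 ^ 2, (0:ℝ))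
      - (0 : (ℝ × ℝ × ℝ) →L[ℝ] (ℝ × ℝ × ℝ)) (p - p₀)‖
      = |p.1 ^ 3 - 4 * βt * Hα p.2.2 * p.1 ^ 2| := by
    simp [hp₀, Prod.norm_def, Real.norm_eq_abs]
  rw [hnorm]
  have h1 : |p.1 ^ 3 - 4 * βt * Hα p.2.2 * p.1 ^ 2| ≤ (|p.1| + 4 * |βt| * M) * p.1 ^ 2 := by
    calc |p.1 ^ 3 - 4 * βt * Hα p.2.2 * p.1 ^ 2|
        ≤ |p.1 ^ 3| + |4 * βt * Hα p.2.2 * p.1 ^ 2| := abs_sub _ _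
      _ ≤ |p.1| * p.1 ^ 2 + (4 * |βt| * M) * p.1 ^ 2 := by
          refine add_le_add (le_of_eq (by rw [abs_pow, ← sq_abs]; ring)) ?_
          calc |4 * βt * Hα p.2.2 * p.1 ^ 2|
              = 4 * |βt| * |Hα p.2.2| * p.1 ^ 2 := by
                rw [abs_mul, abs_mul, abs_mul, abs_of_nonneg (by norm_num : (0:ℝ) ≤ 4),
                  abs_of_nonneg (sq_nonneg p.1)]
            _ ≤ 4 * |βt| * M * p.1 ^ 2 := by
                have hb := hbound _ hw
                gcongr
      _ = (|p.1| + 4 * |βt| * M) * p.1 ^ 2 := by ring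
  have hp2 : p.1 ^ 2 ≤ δ * ‖p - p₀‖ := by
    rw [← sq_abs]
    nlinarith [abs_nonneg p.1, norm_nonneg (p - p₀)]
  have hδε : δ * (4 * |βt| * M + 1) ≤ ε := by
    have h2 : δ ≤ ε / (4 * |βt| * M + 1) := min_le_right _ _
    calc δ * (4 * |βt| * M + 1) ≤ (ε / (4 * |βt| * M + 1)) * (4 * |βt| * M + 1) :=
          mul_le_mul_of_nonneg_right h2 hC.le
      _ = ε := div_mul_cancel₀ _ (ne_of_gt hC)
  calc |p.1 ^ 3 - 4 * βt * Hα p.2.2 * p.1 ^ 2|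
      ≤ (|p.1| + 4 * |βt| * M) * p.1 ^ 2 := h1
    _ ≤ (1 + 4 * |βt| * M) * (δ * ‖p - p₀‖) := by
        refine mul_le_mul (by linarith) hp2 (sq_nonneg _) (by positivity)
    _ = (δ * (4 * |βt| * M + 1)) * ‖p - p₀‖ := by ring
    _ ≤ ε * ‖p - p₀‖ := mul_le_mul_of_nonneg_right hδε (norm_nonneg _)

private lemma smooth_part (βt ct α : ℝ) (w₀ : ℝ) :
    HasFDerivAt (fun p : ℝ × ℝ × ℝ => (p.2.1, βt ^ 2 * p.1 - ct * p.2.1, α / 2 * (1 - p.2.2 ^ 2)))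
      (((ContinuousLinearMap.fst ℝ ℝ ℝ).comp (ContinuousLinearMap.snd ℝ ℝ (ℝ × ℝ))).prod
        (((βt ^ 2) • (ContinuousLinearMap.fst ℝ ℝ (ℝ × ℝ)) -
          ct • ((ContinuousLinearMap.fst ℝ ℝ ℝ).comp (ContinuousLinearMap.snd ℝ ℝ (ℝ × ℝ)))).prod
          ((-α * w₀) • ((ContinuousLinearMap.snd ℝ ℝ ℝ).comp (ContinuousLinearMap.snd ℝ ℝ (ℝ × ℝ))))))
      ((0:ℝ), (0:ℝ), w₀) := by
  set π₁ : (ℝ × ℝ × ℝ) →L[ℝ] ℝ := ContinuousLinearMap.fst ℝ ℝ (ℝ × ℝ)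
  set π₂ : (ℝ × ℝ × ℝ) →L[ℝ] ℝ :=
    (ContinuousLinearMap.fst ℝ ℝ ℝ).comp (ContinuousLinearMap.snd ℝ ℝ (ℝ × ℝ))
  set π₃ : (ℝ × ℝ × ℝ) →L[ℝ] ℝ :=
    (ContinuousLinearMap.snd ℝ ℝ ℝ).comp (ContinuousLinearMap.snd ℝ ℝ (ℝ × ℝ))
  have h1 : HasFDerivAt (fun p : ℝ × ℝ × ℝ => p.2.1) π₂ ((0:ℝ), (0:ℝ), w₀) := π₂.hasFDerivAt
  have h2 : HasFDerivAt (fun p : ℝ × ℝ × ℝ => βt ^ 2 * p.1 - ct * p.2.1)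
      ((βt ^ 2) • π₁ - ct • π₂) ((0:ℝ), (0:ℝ), w₀) :=
    (π₁.hasFDerivAt.const_mul (βt ^ 2)).sub (π₂.hasFDerivAt.const_mul ct)
  have hs : HasDerivAt (fun w : ℝ => α / 2 * (1 - w ^ 2)) (-α * w₀) w₀ := by
    have h := ((hasDerivAt_pow 2 w₀).const_sub (1:ℝ)).const_mul (α / 2)
    refine h.congr_deriv ?_
    ring
  have h3 : HasFDerivAt (fun p : ℝ × ℝ × ℝ => α / 2 * (1 - p.2.2 ^ 2))
      ((-α * w₀) • π₃) ((0:ℝ), (0:ℝ), w₀) :=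
    hs.comp_hasFDerivAt (h₂ := fun w : ℝ => α / 2 * (1 - w ^ 2)) (f := π₃) _ π₃.hasFDerivAt
  exact h1.prodMk (h2.prodMk h3)

/-- The compactified Allee vector field is differentiable (within `ℝ² × [−1, 1]`)
at the equilibria `p̃⁻ = (0,0,−1)` and `p̃⁺ = (0,0,1)`, with derivatives given by the
linear maps with matrices `[[0,1,0],[β̃²,−c̃,0],[0,0,α]]` and
`[[0,1,0],[β̃²,−c̃,0],[0,0,−α]]`, respectively. -/
theorem compactified_allee_jacobian (βt ct α Lt : ℝ) (hβt : 0 < βt)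
    (hα : 0 < α) (hα2 : α ≤ 2) (hLt : 0 < Lt)
    (Ht : ℝ → ℝ)
    (hHt : ∀ z : ℝ,
      Ht z = (Real.tanh (z + Lt / 2) - Real.tanh (z - Lt / 2)) / (2 * Real.tanh (Lt / 2)))
    (Hα : ℝ → ℝ)
    (hHα_in : ∀ s ∈ Set.Ioo (-1 : ℝ) 1,
      Hα s = Ht ((1 / α) * Real.log ((1 + s) / (1 - s))))
    (hHα_neg : Hα (-1) = 0) (hHα_pos : Hα 1 = 0)
    (fA : ℝ → ℝ → ℝ)
    (hfA : ∀ u h : ℝ, fA u h = -βt ^ 2 * u + 4 * βt * h * u ^ 2 - u ^ 3)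
    (F : ℝ × ℝ × ℝ → ℝ × ℝ × ℝ)
    (hF : ∀ p : ℝ × ℝ × ℝ,
      F p = (p.2.1, -ct * p.2.1 - fA p.1 (Hα p.2.2), (α / 2) * (1 - p.2.2 ^ 2))) :
    (∃ A : (ℝ × ℝ × ℝ) →L[ℝ] (ℝ × ℝ × ℝ),
      HasFDerivWithinAt F A
        (Set.univ ×ˢ Set.univ ×ˢ Set.Icc (-1 : ℝ) 1) ((0 : ℝ), (0 : ℝ), (-1 : ℝ)) ∧
      ∀ u v w : ℝ, A (u, v, w) = (v, βt ^ 2 * u - ct * v, α * w)) ∧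
    (∃ B : (ℝ × ℝ × ℝ) →L[ℝ] (ℝ × ℝ × ℝ),
      HasFDerivWithinAt F B
        (Set.univ ×ˢ Set.univ ×ˢ Set.Icc (-1 : ℝ) 1) ((0 : ℝ), (0 : ℝ), (1 : ℝ)) ∧
      ∀ u v w : ℝ, B (u, v, w) = (v, βt ^ 2 * u - ct * v, -α * w)) := by
  -- positivity of tanh (Lt/2)
  have hT : 0 < Real.tanh (Lt / 2) := by
    rw [Real.tanh_eq_sinh_div_cosh]
    exact div_pos (Real.sinh_pos_iff.2 (by linarith)) (Real.cosh_pos _)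
  set M : ℝ := 1 / Real.tanh (Lt / 2) with hMdef
  have hM : 0 ≤ M := by positivity
  -- uniform bound on Hα on [-1,1]
  have hbound : ∀ s ∈ Set.Icc (-1:ℝ) 1, |Hα s| ≤ M := by
    intro s hs
    rcases eq_or_lt_of_le hs.1 with h₁ | h₁
    · rw [← h₁, hHα_neg, abs_zero]; exact hM
    rcases eq_or_lt_of_le hs.2 with h₂ | h₂
    · rw [h₂, hHα_pos, abs_zero]; exact hM
    have hsIoo : s ∈ Set.Ioo (-1:ℝ) 1 := ⟨h₁, h₂⟩
    rw [hHα_in s hsIoo, hHt]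
    set z := (1 / α) * Real.log ((1 + s) / (1 - s))
    have h2T : 0 < 2 * Real.tanh (Lt / 2) := by linarith
    rw [abs_div, abs_of_pos h2T]
    have hnum : |Real.tanh (z + Lt / 2) - Real.tanh (z - Lt / 2)| ≤ 2 :=
      (abs_sub _ _).trans (by linarith [abs_tanh_le_one (z + Lt / 2), abs_tanh_le_one (z - Lt / 2)])
    calc |Real.tanh (z + Lt / 2) - Real.tanh (z - Lt / 2)| / (2 * Real.tanh (Lt / 2))
        ≤ 2 / (2 * Real.tanh (Lt / 2)) := by
          gcongr
      _ = M := by rw [hMdef]; field_simp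
  -- decomposition of F
  have hFeq : F = fun p : ℝ × ℝ × ℝ =>
      (p.2.1, βt ^ 2 * p.1 - ct * p.2.1, α / 2 * (1 - p.2.2 ^ 2)) +
      ((0:ℝ), p.1 ^ 3 - 4 * βt * Hα p.2.2 * p.1 ^ 2, (0:ℝ)) := by
    funext p
    rw [hF p, hfA]
    simp only [Prod.mk_add_mk, Prod.mk.injEq]
    refine ⟨by ring, by ring, by ring⟩
  constructor
  · refine ⟨(((ContinuousLinearMap.fst ℝ ℝ ℝ).comp (ContinuousLinearMap.snd ℝ ℝ (ℝ × ℝ))).prod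
        (((βt ^ 2) • (ContinuousLinearMap.fst ℝ ℝ (ℝ × ℝ)) -
          ct • ((ContinuousLinearMap.fst ℝ ℝ ℝ).comp (ContinuousLinearMap.snd ℝ ℝ (ℝ × ℝ)))).prod
          ((-α * ((-1:ℝ))) • ((ContinuousLinearMap.snd ℝ ℝ ℝ).comp (ContinuousLinearMap.snd ℝ ℝ (ℝ × ℝ)))))), ?_, ?_⟩
    · rw [hFeq]
      have h := (smooth_part βt ct α (-1)).hasFDerivWithinAt.add
        (error_deriv_zero βt M hM Hα hbound (-1))
      simpa [Pi.add_def] using h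
    · intro u v w
      simp [ContinuousLinearMap.prod_apply]
  · refine ⟨(((ContinuousLinearMap.fst ℝ ℝ ℝ).comp (ContinuousLinearMap.snd ℝ ℝ (ℝ × ℝ))).prod
        (((βt ^ 2) • (ContinuousLinearMap.fst ℝ ℝ (ℝ × ℝ)) -
          ct • ((ContinuousLinearMap.fst ℝ ℝ ℝ).comp (ContinuousLinearMap.snd ℝ ℝ (ℝ × ℝ)))).prod
          ((-α * ((1:ℝ))) • ((ContinuousLinearMap.snd ℝ ℝ ℝ).comp (ContinuousLinearMap.snd ℝ ℝ (ℝ × ℝ)))))), ?_, ?_⟩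
    · rw [hFeq]
      have h := (smooth_part βt ct α 1).hasFDerivWithinAt.add
        (error_deriv_zero βt M hM Hα hbound 1)
      simpa [Pi.add_def] using h
    · intro u v w
      simp [ContinuousLinearMap.prod_apply]
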